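/- For f ∈ X_c and α, β > 0, the Mellin fractional differences satisfy the semigroup property: (Δ_h^{α,c}(Δ_h^{β,c} f))(x) = (Δ_h^{α+β,c} f)(x) for almost every x > 0 and every h > 0. -/

import Mathlib

open MeasureTheory Set
open scoped ENNReal NNReal

noncomputable def gbinom (α : ℝ) (j : ℕ) : ℝ :=
  (∏ i ∈ Finset.range j, (α - i)) / (Nat.factorial j)

noncomputable def mellinCoef (α : ℝ) (j : ℕ) : ℂ :=
  (gbinom α j : ℂ) * (-1 : ℂ) ^ ((α : ℂ) - (j : ℂ))

noncomputable def mellinDiff (α c h : ℝ) (f : ℝ → ℂ) (x : ℝ) : ℂ :=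
  ∑' j : ℕ, mellinCoef α j * ((((h : ℝ) ^ j) ^ c : ℝ) : ℂ) * f ((h : ℝ) ^ j * x)

def memXc (c : ℝ) (f : ℝ → ℂ) : Prop :=
  IntegrableOn (fun x : ℝ => x ^ (c - 1) * ‖f x‖) (Set.Ioi 0)

/-! ### Auxiliary lemmas -/

lemma gbinom_succ (α : ℝ) (j : ℕ) :
    gbinom α (j+1) = gbinom α j * (α - j) / (j+1) := by
  simp only [gbinom, Finset.prod_range_succ, Nat.factorial_succ]
  push_cast
  rw [div_mul_eq_mul_div, div_div]
  rw [mul_comm (j.factorial : ℝ)]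

lemma descPoch_prod (α : ℝ) (j : ℕ) :
    (descPochhammer ℤ j).smeval α = ∏ i ∈ Finset.range j, (α - i) := by
  induction j with
  | zero => simp [descPochhammer_zero, Polynomial.smeval_one]
  | succ n ih =>
    rw [descPochhammer_succ_right, Polynomial.smeval_mul, ih, Finset.prod_range_succ]
    congr 1
    simp [Polynomial.smeval_sub, Polynomial.smeval_X, Polynomial.smeval_natCast]

lemma gbinom_eq_ringChoose (α : ℝ) (j : ℕ) : gbinom α j = Ring.choose α j := by
  have h := Ring.descPochhammer_eq_factorial_smul_choose (R := ℝ) α j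
  rw [descPoch_prod] at h
  rw [gbinom, h, nsmul_eq_mul]
  rw [mul_div_cancel_left₀]
  exact Nat.cast_ne_zero.mpr (Nat.factorial_ne_zero j)

lemma gbinom_vandermonde (α β : ℝ) (n : ℕ) :
    ∑ ij ∈ Finset.HasAntidiagonal.antidiagonal n, gbinom α ij.1 * gbinom β ij.2 = gbinom (α+β) n := by
  simp only [gbinom_eq_ringChoose]
  exact (Ring.add_choose_eq n (Commute.all α β)).symm

lemma summable_abs_gbinom {α : ℝ} (hα : 0 < α) :
    Summable (fun j => |gbinom α j|) := by
  set M : ℕ := ⌈α⌉₊ + 1 with hM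
  have hMα : α < M := lt_of_le_of_lt (Nat.le_ceil α) (by exact_mod_cast Nat.lt_succ_self _)
  set C : ℝ := |gbinom α M| * (M : ℝ) ^ (1 + α) with hC
  have hp : (1:ℝ) ≤ 1 + α := by linarith
  have key : ∀ j : ℕ, |gbinom α (M + j)| * ((M + j : ℕ) : ℝ) ^ (1 + α) ≤ C := by
    intro j
    induction j with
    | zero => simp [hC]
    | succ n ih =>
      set m : ℕ := M + n with hm
      have hmpos : (0:ℝ) < m := by positivity
      have hmα : α ≤ (m:ℝ) := by
        have : (M:ℝ) ≤ m := by exact_mod_cast Nat.le_add_right M n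
        linarith
      have hm1 : (0:ℝ) < (m:ℝ) + 1 := by linarith
      have hstep : |gbinom α (m+1)| = |gbinom α m| * ((m - α)/((m:ℝ)+1)) := by
        rw [gbinom_succ, abs_div, abs_mul, mul_div_assoc]
        congr 2
        · rw [abs_of_nonpos (by linarith), neg_sub]
        · rw [abs_of_pos hm1]
      have hbern : ((m:ℝ) - α)/((m:ℝ)+1) ≤ ((m:ℝ)/((m:ℝ)+1)) ^ (1+α) := by
        have hs : (-1:ℝ) ≤ -(1/((m:ℝ)+1)) := by
          rw [neg_le_neg_iff]
          rw [div_le_one hm1]; linarith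
        have := one_add_mul_self_le_rpow_one_add hs hp
        have h1 : 1 + (1+α) * -(1/((m:ℝ)+1)) = ((m:ℝ) - α)/((m:ℝ)+1) := by
          field_simp; ring
        have h2 : (1 + -(1/((m:ℝ)+1))) = (m:ℝ)/((m:ℝ)+1) := by
          field_simp
          ring
        rw [h1, h2] at this
        exact this
      have hMn : M + (n+1) = m + 1 := by omega
      rw [hMn, show ((m+1:ℕ):ℝ) = (m:ℝ)+1 by push_cast; ring, hstep]
      calc |gbinom α m| * (((m:ℝ) - α)/((m:ℝ)+1)) * ((m:ℝ)+1) ^ (1+α)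
          ≤ |gbinom α m| * (((m:ℝ)/((m:ℝ)+1)) ^ (1+α)) * ((m:ℝ)+1) ^ (1+α) := by
            apply mul_le_mul_of_nonneg_right _ (Real.rpow_nonneg (le_of_lt hm1) _)
            exact mul_le_mul_of_nonneg_left hbern (abs_nonneg _)
        _ = |gbinom α m| * (m:ℝ) ^ (1+α) := by
            rw [Real.div_rpow (le_of_lt hmpos) (le_of_lt hm1), mul_assoc,
              div_mul_cancel₀ _ (ne_of_gt (Real.rpow_pos_of_pos hm1 _))]
        _ ≤ C := ih
  have hsum : Summable (fun j : ℕ => C * ((j + M : ℕ) : ℝ) ^ (-(1 + α))) := by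
    apply Summable.mul_left
    have : Summable (fun n : ℕ => ((n:ℝ)) ^ (-(1+α))) :=
      Real.summable_nat_rpow.mpr (by linarith)
    exact (summable_nat_add_iff M).mpr this
  apply (summable_nat_add_iff M).mp
  apply Summable.of_nonneg_of_le (fun j => abs_nonneg _) _ hsum
  intro j
  have hpos : (0:ℝ) < ((j + M : ℕ):ℝ) := by positivity
  have := key j
  rw [Nat.add_comm M j] at this
  rw [Real.rpow_neg (le_of_lt hpos), ← div_eq_mul_inv, le_div_iff₀ (Real.rpow_pos_of_pos hpos _)]
  exact this

lemma norm_mellinCoef (α : ℝ) (j : ℕ) : ‖mellinCoef α j‖ = |gbinom α j| := by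
  have h2 : ‖(-1 : ℂ) ^ ((α : ℂ) - (j : ℂ))‖ = 1 := by
    rw [Complex.norm_cpow_of_ne_zero (by norm_num : (-1:ℂ) ≠ 0)]
    simp
  rw [mellinCoef, norm_mul, Complex.norm_real, Real.norm_eq_abs, h2, mul_one]

lemma lintegral_Ioi_comp_mul_left {a : ℝ} (ha : 0 < a) (g : ℝ → ℝ≥0∞) (hg : Measurable g) :
    ∫⁻ x in Ioi (0:ℝ), g (a * x) = ENNReal.ofReal a⁻¹ * ∫⁻ y in Ioi (0:ℝ), g y := by
  have hpre : (fun x : ℝ => a * x) ⁻¹' (Ioi 0) = Ioi 0 := by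
    ext x
    simp only [Set.mem_preimage, Set.mem_Ioi]
    exact mul_pos_iff_of_pos_left ha
  calc ∫⁻ x in Ioi (0:ℝ), g (a * x)
      = ∫⁻ x, g (a*x) ∂(volume.restrict ((fun x : ℝ => a * x) ⁻¹' (Ioi 0))) := by rw [hpre]
    _ = ∫⁻ y, g y ∂(Measure.map (fun x : ℝ => a * x)
          (volume.restrict ((fun x : ℝ => a * x) ⁻¹' (Ioi 0)))) :=
        (lintegral_map hg (measurable_const_mul a)).symm
    _ = ∫⁻ y, g y ∂((Measure.map (fun x : ℝ => a * x) volume).restrict (Ioi 0)) := by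
        rw [Measure.restrict_map (measurable_const_mul a) measurableSet_Ioi]
    _ = ENNReal.ofReal a⁻¹ * ∫⁻ y in Ioi (0:ℝ), g y := by
        rw [Real.map_volume_mul_left (ne_of_gt ha), Measure.restrict_smul,
          lintegral_smul_measure, abs_of_pos (inv_pos.mpr ha), smul_eq_mul]

/-- The double-difference summand. -/
noncomputable def Uaux (α β c h : ℝ) (f : ℝ → ℂ) (p : ℕ × ℕ) (x : ℝ) : ℂ :=
  mellinCoef α p.1 * (((h ^ p.1) ^ c : ℝ) : ℂ) *
    (mellinCoef β p.2 * (((h ^ p.2) ^ c : ℝ) : ℂ) * f (h ^ p.2 * (h ^ p.1 * x)))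

/-- Semigroup property of Mellin fractional differences:
Δ_h^{α,c}(Δ_h^{β,c} f) = Δ_h^{α+β,c} f a.e. for every h > 0. -/
theorem stmt2 (α β c : ℝ) (hα : 0 < α) (hβ : 0 < β) (f : ℝ → ℂ)
    (hmeas : Measurable f) (hf : memXc c f) :
    ∀ h : ℝ, 0 < h →
      ∀ᵐ x ∂(volume.restrict (Set.Ioi (0 : ℝ))),
        mellinDiff α c h (mellinDiff β c h f) x = mellinDiff (α + β) c h f x := by
  intro h hh
  have hpow : ∀ n : ℕ, (0:ℝ) < h ^ n := fun n => pow_pos hh n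
  -- rewrite the summand
  have hUeq : ∀ (j k : ℕ) (x : ℝ), Uaux α β c h f (j,k) x =
      mellinCoef α j * mellinCoef β k * (((h ^ (j+k)) ^ c : ℝ) : ℂ) * f (h ^ (j+k) * x) := by
    intro j k x
    simp only [Uaux]
    rw [show h^k * (h^j * x) = h^(j+k) * x by rw [pow_add]; ring]
    rw [show ((h^(j+k))^c : ℝ) = (h^j)^c * (h^k)^c by
      rw [pow_add, Real.mul_rpow (le_of_lt (hpow j)) (le_of_lt (hpow k))]]
    push_cast
    ring
  have hnormpow : ∀ n : ℕ, ‖(((h^n)^c : ℝ) : ℂ)‖ = (h^n)^c := by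
    intro n
    rw [Complex.norm_real, Real.norm_eq_abs, abs_of_pos (Real.rpow_pos_of_pos (hpow n) c)]
  have hcoefmul : ∀ (j k : ℕ), mellinCoef α j * mellinCoef β k =
      ((gbinom α j * gbinom β k : ℝ) : ℂ) * (-1:ℂ) ^ (((α+β : ℝ) : ℂ) - ((j+k : ℕ) : ℂ)) := by
    intro j k
    have he : ((α:ℂ) - (j:ℕ)) + ((β:ℂ) - (k:ℕ)) = ((α+β : ℝ):ℂ) - ((j+k : ℕ):ℂ) := by
      push_cast; ring
    rw [mellinCoef, mellinCoef, mul_mul_mul_comm,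
      ← Complex.cpow_add _ _ (by norm_num : (-1:ℂ) ≠ 0), he]
    push_cast
    ring
  -- measurability of the summands
  have hmeasU : ∀ p : ℕ×ℕ, Measurable (fun x => Uaux α β c h f p x) := by
    intro p
    simp only [Uaux]
    exact (((hmeas.comp ((measurable_const_mul (h^p.2)).comp
      (measurable_const_mul (h^p.1)))).const_mul _).const_mul _)
  -- the basic integral
  set g : ℝ → ℝ≥0∞ := fun u => ENNReal.ofReal (u^(c-1) * ‖f u‖) with hg_def
  have hgmeas : Measurable g :=
    ENNReal.measurable_ofReal.comp ((measurable_id.pow measurable_const).mul hmeas.norm)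
  set J : ℝ≥0∞ := ∫⁻ u in Ioi (0:ℝ), g u with hJ_def
  have hJ : J ≠ ⊤ := by
    have h1 : ∀ u : ℝ, g u ≤ (‖u ^ (c-1) * ‖f u‖‖₊ : ℝ≥0∞) := by
      intro u
      rw [← enorm_eq_nnnorm, ← ofReal_norm]
      apply ENNReal.ofReal_le_ofReal
      rw [Real.norm_eq_abs]
      exact le_abs_self _
    exact ne_of_lt (lt_of_le_of_lt (lintegral_mono h1) hf.2)
  -- change of variables
  have hIn : ∀ n : ℕ, ∫⁻ x in Ioi (0:ℝ),
      ENNReal.ofReal (x^(c-1) * ((h^n)^c * ‖f (h^n * x)‖)) = J := by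
    intro n
    set a : ℝ := h^n with ha_def
    have ha : 0 < a := hpow n
    have hptwise : ∀ᵐ x ∂(volume : Measure ℝ), x ∈ Ioi (0:ℝ) →
        ENNReal.ofReal (x^(c-1) * (a^c * ‖f (a*x)‖)) = ENNReal.ofReal a * g (a*x) := by
      refine ae_of_all _ (fun x hx => ?_)
      have hx0 : (0:ℝ) < x := hx
      rw [hg_def]
      simp only
      rw [← ENNReal.ofReal_mul (le_of_lt ha)]
      congr 1
      have hmul : (a*x)^(c-1) = a^(c-1) * x^(c-1) := Real.mul_rpow ha.le (le_of_lt hx0)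
      have hac : a^c = a * a^(c-1) := by
        conv_lhs => rw [show c = 1 + (c-1) by ring]
        rw [Real.rpow_add ha, Real.rpow_one]
      rw [hmul, hac]; ring
    have hga : Measurable fun x : ℝ => g (a * x) := hgmeas.comp (measurable_const_mul a)
    rw [setLIntegral_congr_fun_ae measurableSet_Ioi hptwise,
      lintegral_const_mul _ hga,
      lintegral_Ioi_comp_mul_left ha g hgmeas, ← mul_assoc,
      ← ENNReal.ofReal_mul ha.le, mul_inv_cancel₀ (ne_of_gt ha), ENNReal.ofReal_one, one_mul]
  -- finiteness of coefficient sums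
  have hsummc : ∀ γ : ℝ, 0 < γ → Summable (fun j => ‖mellinCoef γ j‖) := by
    intro γ hγ
    simpa only [norm_mellinCoef] using summable_abs_gbinom hγ
  have hcoef_fin : ∀ γ : ℝ, 0 < γ → (∑' j, ENNReal.ofReal ‖mellinCoef γ j‖) ≠ ⊤ := by
    intro γ hγ
    rw [← ENNReal.ofReal_tsum_of_nonneg (fun j => norm_nonneg _) (hsummc γ hγ)]
    exact ENNReal.ofReal_ne_top
  -- the key finiteness claim
  have claim1 : ∫⁻ x in Ioi (0:ℝ),
      ENNReal.ofReal (x^(c-1)) * ∑' p : ℕ×ℕ, (‖Uaux α β c h f p x‖₊ : ℝ≥0∞) ≠ ⊤ := by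
    have step1 : ∀ x : ℝ, ENNReal.ofReal (x^(c-1)) * ∑' p : ℕ×ℕ, (‖Uaux α β c h f p x‖₊:ℝ≥0∞)
        = ∑' p : ℕ×ℕ, ENNReal.ofReal (x^(c-1)) * ‖Uaux α β c h f p x‖₊ :=
      fun x => ENNReal.tsum_mul_left.symm
    have hmeas1 : ∀ p : ℕ×ℕ, Measurable fun x : ℝ =>
        ENNReal.ofReal (x^(c-1)) * (‖Uaux α β c h f p x‖₊ : ℝ≥0∞) := fun p =>
      (ENNReal.measurable_ofReal.comp (measurable_id.pow measurable_const)).mul (hmeasU p).enorm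
    rw [lintegral_congr step1, lintegral_tsum (fun p => (hmeas1 p).aemeasurable)]
    have per : ∀ p : ℕ×ℕ, ∫⁻ x in Ioi (0:ℝ), ENNReal.ofReal (x^(c-1)) * ‖Uaux α β c h f p x‖₊ =
        ENNReal.ofReal ‖mellinCoef α p.1‖ * ENNReal.ofReal ‖mellinCoef β p.2‖ * J := by
      rintro ⟨j,k⟩
      have hnorm : ∀ᵐ x ∂(volume : Measure ℝ), x ∈ Ioi (0:ℝ) →
          ENNReal.ofReal (x^(c-1)) * (‖Uaux α β c h f (j,k) x‖₊:ℝ≥0∞) =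
          ENNReal.ofReal ‖mellinCoef α j‖ * ENNReal.ofReal ‖mellinCoef β k‖ *
            ENNReal.ofReal (x^(c-1) * ((h^(j+k))^c * ‖f (h^(j+k) * x)‖)) := by
        refine ae_of_all _ (fun x hx => ?_)
        have hx0 : (0:ℝ) < x := hx
        have hUn : ‖Uaux α β c h f (j,k) x‖ =
            ‖mellinCoef α j‖ * (‖mellinCoef β k‖ * ((h^(j+k))^c * ‖f (h^(j+k) * x)‖)) := by
          rw [hUeq j k x, norm_mul, norm_mul, norm_mul, hnormpow]
          ring
        rw [← enorm_eq_nnnorm, ← ofReal_norm, hUn,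
          ← ENNReal.ofReal_mul (le_of_lt (Real.rpow_pos_of_pos hx0 (c-1))),
          show x^(c-1) * (‖mellinCoef α j‖ * (‖mellinCoef β k‖ *
              ((h^(j+k))^c * ‖f (h^(j+k) * x)‖))) =
            ‖mellinCoef α j‖ * (‖mellinCoef β k‖ *
              (x^(c-1) * ((h^(j+k))^c * ‖f (h^(j+k) * x)‖))) by ring,
          ENNReal.ofReal_mul (norm_nonneg _), ENNReal.ofReal_mul (norm_nonneg _), mul_assoc]
      have hmeas2 : Measurable fun x : ℝ =>
          ENNReal.ofReal (x^(c-1) * ((h^(j+k))^c * ‖f (h^(j+k) * x)‖)) :=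
        ENNReal.measurable_ofReal.comp ((measurable_id.pow measurable_const).mul
          (((hmeas.comp (measurable_const_mul (h^(j+k)))).norm).const_mul _))
      rw [setLIntegral_congr_fun_ae measurableSet_Ioi hnorm, lintegral_const_mul _ hmeas2,
        hIn (j+k)]
    rw [tsum_congr per]
    have hrw : ∀ p : ℕ×ℕ, ENNReal.ofReal ‖mellinCoef α p.1‖ *
        ENNReal.ofReal ‖mellinCoef β p.2‖ * J =
        ENNReal.ofReal ‖mellinCoef α p.1‖ * (ENNReal.ofReal ‖mellinCoef β p.2‖ * J) :=
      fun p => mul_assoc _ _ _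
    rw [tsum_congr hrw, ENNReal.tsum_prod']
    have hinner : ∀ j : ℕ, (∑' k : ℕ, ENNReal.ofReal ‖mellinCoef α j‖ *
        (ENNReal.ofReal ‖mellinCoef β k‖ * J)) =
        ENNReal.ofReal ‖mellinCoef α j‖ * ((∑' k, ENNReal.ofReal ‖mellinCoef β k‖) * J) := by
      intro j
      rw [ENNReal.tsum_mul_left, ENNReal.tsum_mul_right]
    rw [tsum_congr hinner, ENNReal.tsum_mul_right]
    exact ENNReal.mul_ne_top (hcoef_fin α hα) (ENNReal.mul_ne_top (hcoef_fin β hβ) hJ)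
  -- a.e. summability
  have hGmeas : Measurable (fun x : ℝ =>
      ENNReal.ofReal (x^(c-1)) * ∑' p : ℕ×ℕ, (‖Uaux α β c h f p x‖₊ : ℝ≥0∞)) :=
    (ENNReal.measurable_ofReal.comp (measurable_id.pow measurable_const)).mul
      (Measurable.ennreal_tsum (fun p => (hmeasU p).enorm))
  have hae := ae_lt_top hGmeas claim1
  filter_upwards [hae, ae_restrict_mem measurableSet_Ioi] with x hlt hx
  have hx0 : (0:ℝ) < x := hx
  have hne : ENNReal.ofReal (x^(c-1)) ≠ 0 := by
    simp only [ne_eq, ENNReal.ofReal_eq_zero, not_le]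
    exact Real.rpow_pos_of_pos hx0 _
  have hGfin : ∑' p : ℕ×ℕ, (‖Uaux α β c h f p x‖₊:ℝ≥0∞) ≠ ⊤ := by
    intro htop
    rw [htop, ENNReal.mul_top hne] at hlt
    exact lt_irrefl _ hlt
  have hsummN : Summable (fun p : ℕ×ℕ => ‖Uaux α β c h f p x‖₊) :=
    ENNReal.tsum_coe_ne_top_iff_summable.mp hGfin
  have hsumm : Summable (fun p : ℕ×ℕ => ‖Uaux α β c h f p x‖) := by
    have := NNReal.summable_coe.mpr hsummN
    simpa only [coe_nnnorm] using this
  have hU : Summable (fun p : ℕ×ℕ => Uaux α β c h f p x) := hsumm.of_norm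
  -- the algebraic identity
  have e1 : mellinDiff α c h (mellinDiff β c h f) x = ∑' j, ∑' k, Uaux α β c h f (j,k) x := by
    simp only [mellinDiff]
    refine tsum_congr fun j => ?_
    rw [← tsum_mul_left]
    exact tsum_congr fun k => by simp only [Uaux]
  have e2 : ∑' j, ∑' k, Uaux α β c h f (j,k) x = ∑' p : ℕ×ℕ, Uaux α β c h f p x :=
    (Summable.tsum_prod' hU hU.prod_factor).symm
  have e3 : ∑' p : ℕ×ℕ, Uaux α β c h f p x =
      ∑' n, ∑ p ∈ Finset.HasAntidiagonal.antidiagonal n, Uaux α β c h f p x := by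
    have hUs : Summable (fun σ : Σ n : ℕ, {p : ℕ × ℕ // p ∈ Finset.HasAntidiagonal.antidiagonal n} =>
        Uaux α β c h f (Finset.HasAntidiagonal.sigmaAntidiagonalEquivProd σ) x) :=
      Finset.HasAntidiagonal.sigmaAntidiagonalEquivProd.summable_iff.mpr hU
    rw [← Finset.HasAntidiagonal.sigmaAntidiagonalEquivProd.tsum_eq (fun p : ℕ×ℕ => Uaux α β c h f p x)]
    rw [Summable.tsum_sigma' (fun n => (hasSum_fintype _).summable) hUs]
    refine tsum_congr fun n => ?_
    rw [tsum_fintype]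
    exact Finset.sum_coe_sort (Finset.HasAntidiagonal.antidiagonal n) (fun p => Uaux α β c h f p x)
  have e4 : ∀ n : ℕ, ∑ p ∈ Finset.HasAntidiagonal.antidiagonal n, Uaux α β c h f p x =
      mellinCoef (α+β) n * (((h^n)^c : ℝ):ℂ) * f (h^n * x) := by
    intro n
    have hterm : ∀ p ∈ Finset.HasAntidiagonal.antidiagonal n, Uaux α β c h f p x =
        ((gbinom α p.1 * gbinom β p.2 : ℝ):ℂ) *
          ((-1:ℂ) ^ (((α+β:ℝ):ℂ) - ((n:ℕ):ℂ)) * ((((h:ℝ)^n)^c : ℝ):ℂ) * f ((h:ℝ)^n * x)) := by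
      rintro ⟨j,k⟩ hp
      have hjk : j + k = n := Finset.HasAntidiagonal.mem_antidiagonal.mp hp
      rw [hUeq j k x, hcoefmul j k, hjk]
      ring
    rw [Finset.sum_congr rfl hterm, ← Finset.sum_mul]
    have hsum : (∑ p ∈ Finset.HasAntidiagonal.antidiagonal n, ((gbinom α p.1 * gbinom β p.2 : ℝ):ℂ)) =
        ((gbinom (α+β) n : ℝ):ℂ) := by
      rw [← gbinom_vandermonde α β n]
      push_cast
      rfl
    rw [hsum, mellinCoef]
    push_cast
    ring
  rw [e1, e2, e3]
  simp only [mellinDiff]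
  exact tsum_congr e4
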